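/- For every positive integer n, lcm(1,2,...,n) ≥ 2^{n-1}. -/

import Mathlib

open Finset Nat

lemma fact_mul_choose_le_log {p n k : ℕ} (hp : p.Prime) (hk : 1 ≤ k) (hkn : k ≤ n) :
    k.factorization p + (n.choose k).factorization p ≤ Nat.log p n := by
  set v := k.factorization p with hv
  have hpv : p ^ v ∣ k := Nat.ordProj_dvd k p
  have hvlog : v ≤ Nat.log p n :=
    Nat.le_log_of_pow_le hp.one_lt ((Nat.ordProj_le p (Nat.one_le_iff_ne_zero.mp hk)).trans hkn)
  have hC : (n.choose k).factorization p ≤ Nat.log p n - v := by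
    have hfin : FiniteMultiplicity p (n.choose k) :=
      Nat.finiteMultiplicity_iff.2 ⟨hp.ne_one, Nat.choose_pos hkn⟩
    rw [Nat.factorization_def _ hp, @padicValNat_def _ ⟨hp⟩ _ (Nat.choose_pos hkn).ne']
    rw [← Nat.cast_le (α := ℕ∞), ← FiniteMultiplicity.emultiplicity_eq_multiplicity hfin,
      hp.emultiplicity_choose hkn (Nat.lt_succ_self (Nat.log p n)), Nat.cast_le]
    calc #{i ∈ Ico 1 (Nat.log p n + 1) | p ^ i ≤ k % p ^ i + (n - k) % p ^ i}
        ≤ #(Ico (v + 1) (Nat.log p n + 1)) := by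
          apply card_le_card
          intro i hi
          simp only [mem_filter, mem_Ico] at hi ⊢
          refine ⟨?_, hi.1.2⟩
          by_contra h
          have hiv : i ≤ v := by omega
          have h1 : k % p ^ i = 0 :=
            Nat.mod_eq_zero_of_dvd ((pow_dvd_pow p hiv).trans hpv)
          have h2 : (n - k) % p ^ i < p ^ i := Nat.mod_lt _ (pow_pos hp.pos i)
          omega
      _ = Nat.log p n - v := by rw [Nat.card_Ico]; omega
  omega

lemma lcm_Icc_ne_zero (n : ℕ) : ((Finset.Icc 1 n).lcm id : ℕ) ≠ 0 := by
  intro h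
  rw [Finset.lcm_eq_zero_iff] at h
  obtain ⟨x, hx, hx0⟩ := h
  simp only [Finset.coe_Icc, Set.mem_Icc, Finset.mem_Icc, id_eq] at hx hx0
  omega

lemma mul_choose_dvd_lcm {n k : ℕ} (hk : 1 ≤ k) (hkn : k ≤ n) :
    k * n.choose k ∣ ((Finset.Icc 1 n).lcm id : ℕ) := by
  have hn : 0 < n := hk.trans hkn
  have hL : ((Finset.Icc 1 n).lcm id : ℕ) ≠ 0 := lcm_Icc_ne_zero n
  have hne : k * n.choose k ≠ 0 :=
    Nat.mul_ne_zero (Nat.one_le_iff_ne_zero.mp hk) (Nat.choose_pos hkn).ne'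
  rw [← Nat.factorization_le_iff_dvd hne hL, Finsupp.le_def]
  intro p
  by_cases hp : p.Prime
  · rw [Nat.factorization_mul (Nat.one_le_iff_ne_zero.mp hk) (Nat.choose_pos hkn).ne']
    have h1 : k.factorization p + (n.choose k).factorization p ≤ Nat.log p n :=
      fact_mul_choose_le_log hp hk hkn
    have h2 : p ^ Nat.log p n ∣ ((Finset.Icc 1 n).lcm id : ℕ) := by
      apply Finset.dvd_lcm (f := id) (b := p ^ Nat.log p n)
      simp only [mem_Icc]
      exact ⟨Nat.one_le_iff_ne_zero.mpr (pow_ne_zero _ hp.pos.ne'),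
        Nat.pow_log_le_self p hn.ne'⟩
    have h3 := (Nat.Prime.pow_dvd_iff_le_factorization hp hL).1 h2
    simp only [Finsupp.coe_add, Pi.add_apply]
    omega
  · simp [Nat.factorization_eq_zero_of_not_prime _ hp]

theorem lcm_ge_two_pow (n : ℕ) (hn : 0 < n) :
    2 ^ (n - 1) ≤ ((Finset.Icc 1 n).lcm id : ℕ) := by
  set L := ((Finset.Icc 1 n).lcm id : ℕ) with hLdef
  have hL0 : 0 < L := Nat.pos_of_ne_zero (lcm_Icc_ne_zero n)
  have key : ∀ k < n, n * (n - 1).choose k ≤ L := by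
    intro k hk
    have hid : n * (n - 1).choose k = (k + 1) * n.choose (k + 1) := by
      obtain ⟨m, rfl⟩ : ∃ m, n = m + 1 := ⟨n - 1, by omega⟩
      simp only [Nat.add_sub_cancel]
      rw [Nat.add_one_mul_choose_eq m k, Nat.mul_comm]
    rw [hid]
    exact Nat.le_of_dvd hL0 (mul_choose_dvd_lcm (Nat.succ_le_succ (Nat.zero_le k)) hk)
  have hsum : n * 2 ^ (n - 1) ≤ n * L := by
    calc n * 2 ^ (n - 1) = ∑ k ∈ range n, n * (n - 1).choose k := by
          rw [← Finset.mul_sum]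
          congr 1
          have h : n = (n - 1) + 1 := by omega
          rw [h]
          simp only [Nat.add_sub_cancel]
          exact (Nat.sum_range_choose (n - 1)).symm
      _ ≤ ∑ _k ∈ range n, L := Finset.sum_le_sum fun k hk => key k (mem_range.mp hk)
      _ = n * L := by simp [Finset.sum_const, mul_comm]
  exact Nat.le_of_mul_le_mul_left hsum hn
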